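/- For every drift parameter p ∈ [1/2, 1], with A_n⁺ = {i ≥ 0 : T_i ≤ n} denoting the set of active frogs that started at non-negative sites, almost surely (1/n) · min_{i ∈ A_n⁺} Z_n^i converges to 2p − 1 as n → ∞. -/

import Mathlib

open MeasureTheory ProbabilityTheory Filter
open scoped ENNReal NNReal Topology

/-- The trajectory attached to the frog starting at site `i`:
`frogS X ω i n = ∑_{k=1}^n X_k^i(ω)` is its displacement `n` steps after its activation. -/
def frogS {Ω : Type*} (X : ℤ → ℕ → Ω → ℤ) (ω : Ω) (i : ℤ) (n : ℕ) : ℤ :=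
  ∑ k ∈ Finset.Icc 1 n, X i k ω

/-- First time (as an element of `ℕ∞`) at which the walk attached to frog `j`
(which starts at `j`) visits site `i`. -/
noncomputable def hitTime (S : ℤ → ℕ → ℤ) (j i : ℤ) : ℕ∞ :=
  sInf {t : ℕ∞ | ∃ n : ℕ, t = n ∧ j + S j n = i}

/-- Activation time `T_i` of the frog initially at site `i`, in the frog model with one
active frog at `0` and one sleeping frog at every other site: since every activated frog
follows its attached trajectory from its activation time onwards, `T_i` is the
first-passage-percolation infimum over activation chains `0 = c 0, c 1, …, c m = i` of the
sums of the successive hitting times.  This is the (unique, canonical) solution of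
`T_0 = 0`, `T_i = inf {n ∈ ℕ : ∃ j, T_j ≤ n ∧ j + S^j_{n - T_j} = i}`. -/
noncomputable def frogT (S : ℤ → ℕ → ℤ) (i : ℤ) : ℕ∞ :=
  sInf {t : ℕ∞ | ∃ (m : ℕ) (c : ℕ → ℤ), c 0 = 0 ∧ c m = i ∧
    t = ∑ l ∈ Finset.range m, hitTime S (c l) (c (l + 1))}

/-- Activation times `T_i⁺` in the frog model without negative frogs (one active frog at `0`,
one sleeping frog at every positive integer site and no frogs at negative sites):
only activation chains staying in the non-negative integers are available. -/
noncomputable def frogTplus (S : ℤ → ℕ → ℤ) (i : ℤ) : ℕ∞ :=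
  sInf {t : ℕ∞ | ∃ (m : ℕ) (c : ℕ → ℤ), c 0 = 0 ∧ c m = i ∧ (∀ l ≤ m, 0 ≤ c l) ∧
    t = ∑ l ∈ Finset.range m, hitTime S (c l) (c (l + 1))}

/-- Position `Z_n^i` of frog `i` at time `n`: it sits at `i` until its activation time and
then follows its attached trajectory. -/
noncomputable def frogZ (S : ℤ → ℕ → ℤ) (n : ℕ) (i : ℤ) : ℤ :=
  if frogT S i ≤ (n : ℕ∞) then i + S i (n - (frogT S i).toNat) else i

/-- `M_n`, the maximum of the positions of the active frogs at time `n`. -/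
noncomputable def frogM (S : ℤ → ℕ → ℤ) (n : ℕ) : ℤ :=
  sSup {z : ℤ | ∃ i : ℤ, frogT S i ≤ (n : ℕ∞) ∧ frogZ S n i = z}

/-- `m_n`, the minimum of the positions of the active frogs at time `n`. -/
noncomputable def frogm (S : ℤ → ℕ → ℤ) (n : ℕ) : ℤ :=
  sInf {z : ℤ | ∃ i : ℤ, frogT S i ≤ (n : ℕ∞) ∧ frogZ S n i = z}

/-- The set `A_n` of active frogs at time `n`, as a `Finset`.  (Activation spreads with
speed at most one, so all active frogs lie in `[-n, n]`.) -/
noncomputable def frogA (S : ℤ → ℕ → ℤ) (n : ℕ) : Finset ℤ :=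
  (Finset.Icc (-(n : ℤ)) n).filter fun i => frogT S i ≤ (n : ℕ∞)

/-- The random input of the frog model on `ℤ` with drift parameter `p`: an i.i.d. family
`(X_k^i)_{i ∈ ℤ, k ∈ ℕ}` with `P(X_k^i = 1) = p = 1 - P(X_k^i = -1)`. -/
structure IsFrogModel {Ω : Type*} [MeasurableSpace Ω] (P : Measure Ω)
    (X : ℤ → ℕ → Ω → ℤ) (p : ℝ) : Prop where
  meas : ∀ i k, Measurable (X i k)
  indep : iIndepFun (fun ik : ℤ × ℕ => X ik.1 ik.2) P
  prob_one : ∀ i k, P {ω | X i k ω = 1} = ENNReal.ofReal p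
  prob_neg_one : ∀ i k, P {ω | X i k ω = -1} = ENNReal.ofReal (1 - p)

open Real
section Scalar

lemma exp_le_quad {x : ℝ} (hx : |x| ≤ 1) : Real.exp x ≤ 1 + x + x^2 := by
  have h := Real.exp_bound hx (by norm_num : 0 < 2)
  have hsum : ∑ m ∈ Finset.range 2, x ^ m / (Nat.factorial m) = 1 + x := by
    simp [Finset.sum_range_succ]
  rw [hsum] at h
  have := (abs_le.1 h).2
  rw [sq_abs] at this
  norm_num [Nat.factorial] at this
  nlinarith [sq_nonneg x]

lemma two_point_mgf_le {p : ℝ} (hp : 1/2 ≤ p) (hp1 : p ≤ 1) {t : ℝ} (ht : |t| ≤ 1/2) :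
    p * Real.exp t + (1 - p) * Real.exp (-t) ≤ Real.exp ((2*p-1)*t + t^2) := by
  have hq0 : (0:ℝ) ≤ 1 - p := by linarith
  have hp0 : (0:ℝ) ≤ p := by linarith
  have habs := abs_le.1 ht
  have e1 : Real.exp t = Real.exp ((2*p-1)*t) * Real.exp (2*(1-p)*t) := by
    rw [← Real.exp_add]; congr 1; ring
  have e2 : Real.exp (-t) = Real.exp ((2*p-1)*t) * Real.exp (-(2*p*t)) := by
    rw [← Real.exp_add]; congr 1; ring
  have hb1 : |2*(1-p)*t| ≤ 1 := by
    have : |2*(1-p)*t| = 2*(1-p)*|t| := by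
      rw [abs_mul, abs_of_nonneg (by linarith : (0:ℝ) ≤ 2*(1-p))]
    rw [this]; nlinarith [abs_nonneg t]
  have hb2 : |(-(2*p*t))| ≤ 1 := by
    have : |(-(2*p*t))| = 2*p*|t| := by
      rw [abs_neg, abs_mul, abs_of_nonneg (by linarith : (0:ℝ) ≤ 2*p)]
    rw [this]; nlinarith [abs_nonneg t]
  have q1 := exp_le_quad hb1
  have q2 := exp_le_quad hb2
  have inner : p * Real.exp (2*(1-p)*t) + (1-p) * Real.exp (-(2*p*t)) ≤ 1 + t^2 := by
    have h4pq : 4*p*(1-p) ≤ 1 := by nlinarith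
    nlinarith [mul_le_mul_of_nonneg_left q1 hp0, mul_le_mul_of_nonneg_left q2 hq0,
      sq_nonneg t, mul_nonneg (mul_nonneg hp0 hq0) (sq_nonneg t)]
  calc p * Real.exp t + (1-p) * Real.exp (-t)
      = Real.exp ((2*p-1)*t) * (p * Real.exp (2*(1-p)*t) + (1-p) * Real.exp (-(2*p*t))) := by
        rw [e1, e2]; ring
    _ ≤ Real.exp ((2*p-1)*t) * (1 + t^2) :=
        mul_le_mul_of_nonneg_left inner (Real.exp_pos _).le
    _ ≤ Real.exp ((2*p-1)*t) * Real.exp (t^2) :=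
        mul_le_mul_of_nonneg_left (by linarith [Real.add_one_le_exp (t^2)]) (Real.exp_pos _).le
    _ = Real.exp ((2*p-1)*t + t^2) := (Real.exp_add _ _).symm

end Scalar


section Det

variable {S : ℤ → ℕ → ℤ}

/-- steps hypothesis -/
def Steps (S : ℤ → ℕ → ℤ) : Prop :=
  (∀ i, S i 0 = 0) ∧ ∀ i m, S i (m+1) = S i m + 1 ∨ S i (m+1) = S i m - 1

theorem Steps.abs_le (h : Steps S) (i : ℤ) (m : ℕ) : |S i m| ≤ (m : ℤ) := by
  induction m with
  | zero => simp [h.1 i]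
  | succ m ih =>
    rcases h.2 i m with h' | h' <;> rw [h'] <;> rw [Int.abs_eq_natAbs] at ih ⊢ <;> omega

theorem Steps.reach (h : Steps S) (i a : ℤ) (t : ℕ) (ha0 : 0 ≤ a) (hat : a ≤ S i t) :
    ∃ s ≤ t, S i s = a := by
  induction t with
  | zero =>
    refine ⟨0, le_refl _, ?_⟩
    rw [h.1 i] at hat ⊢
    omega
  | succ t ih =>
    by_cases hle : a ≤ S i t
    · obtain ⟨s, hs, hsa⟩ := ih hle
      exact ⟨s, hs.trans (Nat.le_succ t), hsa⟩
    · refine ⟨t+1, le_refl _, ?_⟩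
      rcases h.2 i t with h' | h' <;> rw [h'] at hat ⊢ <;> omega

theorem hitTime_le {j i : ℤ} {s : ℕ} (hs : j + S j s = i) : hitTime S j i ≤ (s : ℕ∞) :=
  sInf_le ⟨s, rfl, hs⟩

theorem Steps.hitTime_ge (h : Steps S) (j i : ℤ) :
    ((i - j).natAbs : ℕ∞) ≤ hitTime S j i := by
  refine le_sInf fun t ht => ?_
  obtain ⟨n, rfl, hn⟩ := ht
  have hd : (i - j).natAbs ≤ n := by
    have h1 := h.abs_le j n
    rw [Int.abs_eq_natAbs] at h1
    omega
  exact_mod_cast Nat.cast_le.2 hd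

theorem frogT_zero : frogT S 0 = 0 := by
  refine le_antisymm (sInf_le ⟨0, fun _ => 0, rfl, rfl, by simp⟩) zero_le

theorem frogT_le_hitTime (i : ℤ) : frogT S i ≤ hitTime S 0 i := by
  refine sInf_le ⟨1, fun l => if l = 0 then 0 else i, by simp, by simp, ?_⟩
  simp

theorem Steps.frogT_ge (h : Steps S) (i : ℤ) : (i.natAbs : ℕ∞) ≤ frogT S i := by
  refine le_sInf fun t ht => ?_
  obtain ⟨m, c, h0, hm, rfl⟩ := ht
  have key : ∀ M : ℕ, ((c M - c 0).natAbs : ℕ∞) ≤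
      ∑ l ∈ Finset.range M, hitTime S (c l) (c (l + 1)) := by
    intro M
    induction M with
    | zero => simp
    | succ M ih =>
      rw [Finset.sum_range_succ]
      have tri : ((c (M+1) - c 0).natAbs : ℕ∞) ≤
          ((c M - c 0).natAbs : ℕ∞) + ((c (M+1) - c M).natAbs : ℕ∞) := by
        have := Int.natAbs_add_le (c M - c 0) (c (M+1) - c M)
        have h2 : c (M+1) - c 0 = (c M - c 0) + (c (M+1) - c M) := by ring
        rw [h2]
        exact_mod_cast Nat.cast_le.2 this
      exact tri.trans (add_le_add ih (h.hitTime_ge (c M) (c (M+1))))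
  have := key m
  rw [h0, hm, sub_zero] at this
  exact this

end Det

section Main
variable {S : ℤ → ℕ → ℤ}

theorem frogZ_active {i : ℤ} {n : ℕ} (hT : frogT S i ≤ (n : ℕ∞)) :
    frogZ S n i = i + S i (n - (frogT S i).toNat) := if_pos hT

theorem active_basic (h : Steps S) {i : ℤ} {n : ℕ} (hi0 : 0 ≤ i) (hT : frogT S i ≤ (n : ℕ∞)) :
    (frogT S i).toNat ≤ n ∧ i.natAbs ≤ (frogT S i).toNat := by
  constructor
  · have := ENat.toNat_le_toNat hT (by simp)
    simpa using this
  · have h1 := h.frogT_ge i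
    have := ENat.toNat_le_toNat (h1.trans hT) (by simp)
    have h2 := ENat.toNat_le_toNat h1 (ne_top_of_le_ne_top (by simp) hT)
    simpa using h2

theorem frog_mem0 (n : ℕ) :
    S 0 n ∈ {z : ℤ | ∃ i : ℤ, 0 ≤ i ∧ frogT S i ≤ (n : ℕ∞) ∧ frogZ S n i = z} := by
  refine ⟨0, le_refl _, by rw [frogT_zero]; exact zero_le, ?_⟩
  rw [frogZ_active (by rw [frogT_zero]; exact zero_le), frogT_zero]
  simp

theorem frog_bddBelow (h : Steps S) (n : ℕ) :
    BddBelow {z : ℤ | ∃ i : ℤ, 0 ≤ i ∧ frogT S i ≤ (n : ℕ∞) ∧ frogZ S n i = z} := by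
  refine ⟨-(n : ℤ), fun z hz => ?_⟩
  obtain ⟨i, hi0, hT, rfl⟩ := hz
  rw [frogZ_active hT]
  have := h.abs_le i (n - (frogT S i).toNat)
  have hle : ((n - (frogT S i).toNat : ℕ) : ℤ) ≤ (n : ℤ) := by exact_mod_cast Nat.sub_le _ _
  rw [Int.abs_eq_natAbs] at this
  omega

theorem frog_det (S : ℤ → ℕ → ℤ) (μ : ℝ) (hμ0 : 0 ≤ μ) (hμ1 : μ ≤ 1) (h : Steps S)
    (hdev : ∀ ε : ℝ, 0 < ε → ∀ᶠ n : ℕ in atTop, ∀ i : ℤ, 0 ≤ i → i ≤ (n : ℤ) →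
      ∀ m : ℕ, m ≤ n → |((S i m : ℝ)) - μ * m| ≤ ε * n) :
    Tendsto (fun n : ℕ =>
      ((sInf {z : ℤ | ∃ i : ℤ, 0 ≤ i ∧ frogT S i ≤ (n : ℕ∞) ∧ frogZ S n i = z} : ℤ) : ℝ) / n)
      atTop (𝓝 μ) := by
  set A : ℕ → Set ℤ := fun n =>
    {z : ℤ | ∃ i : ℤ, 0 ≤ i ∧ frogT S i ≤ (n : ℕ∞) ∧ frogZ S n i = z} with hA
  rw [tendsto_order]
  constructor
  · -- lower bound: ∀ c < μ, eventually c < sInf/n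
    intro c hc
    rcases eq_or_lt_of_le hμ0 with hμz | hμpos
    · -- μ = 0, c < 0
      have hcneg : c < 0 := by rw [← hμz] at hc; exact hc
      have hε : (0:ℝ) < -c/2 := by linarith
      filter_upwards [hdev (-c/2) hε, eventually_ge_atTop 1] with n hQ hn1
      have hn0 : (0:ℝ) < n := by exact_mod_cast hn1
      rw [lt_div_iff₀ hn0]
      -- sInf is a member
      have hmem := Int.csInf_mem ⟨S 0 n, frog_mem0 n⟩ (frog_bddBelow h n)
      obtain ⟨i, hi0, hT, heq⟩ := hmem
      obtain ⟨hTn, hiT⟩ := active_basic h hi0 hT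
      have hin : i ≤ (n : ℤ) := by omega
      have hdevi := hQ i hi0 hin (n - (frogT S i).toNat) (Nat.sub_le _ _)
      rw [← heq, frogZ_active hT]
      have hir : (0:ℝ) ≤ (i:ℝ) := by exact_mod_cast hi0
      have habs := abs_le.1 hdevi
      push_cast
      rw [← hμz] at habs
      nlinarith [habs.1]
    · -- μ > 0
      set K : ℕ := ⌈1/μ⌉₊ + 2 with hK
      clear_value K
      have hKr : (1:ℝ)/μ ≤ (⌈1/μ⌉₊ : ℝ) := Nat.le_ceil _
      have h2K : 2 ≤ K := by rw [hK]; exact Nat.le_add_left 2 _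
      have hK0 : (0:ℝ) < K := by
        have : (0:ℕ) < K := by omega
        exact_mod_cast this
      set ε : ℝ := min (μ/(2*K)) ((μ-c)/(2*(K+1))) with hεdef
      have hε : 0 < ε := by
        rw [hεdef]
        apply lt_min
        · positivity
        · have : (0:ℝ) < μ - c := by linarith
          positivity
      have hεle1 : ε ≤ μ/(2*K) := by rw [hεdef]; exact min_le_left _ _
      have hεle2 : ε ≤ (μ-c)/(2*(K+1)) := by rw [hεdef]; exact min_le_right _ _
      clear_value ε
      have hKmul : Tendsto (fun n : ℕ => K * n) atTop atTop :=
        tendsto_atTop_mono (fun n => Nat.le_mul_of_pos_left n (by omega)) tendsto_id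
      have hbig : Tendsto (fun n : ℕ => (n:ℝ)) atTop atTop := tendsto_natCast_atTop_atTop
      filter_upwards [hdev ε hε, hKmul.eventually (hdev ε hε), eventually_ge_atTop 1,
        hbig.eventually_gt_atTop (2*μ/(μ-c))] with n hQ hQK hn1 hnbig
      have hn0 : (0:ℝ) < n := by exact_mod_cast hn1
      rw [lt_div_iff₀ hn0]
      have hmem := Int.csInf_mem ⟨S 0 n, frog_mem0 n⟩ (frog_bddBelow h n)
      obtain ⟨i, hi0, hT, heq⟩ := hmem
      obtain ⟨hTn, hiT⟩ := active_basic h hi0 hT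
      have hin : i ≤ (n : ℤ) := by omega
      have hinr : (i:ℝ) ≤ (n:ℝ) := by exact_mod_cast hin
      have hir : (0:ℝ) ≤ (i:ℝ) := by exact_mod_cast hi0
      -- the hitting-time bound
      set D : ℝ := ε * (K*n : ℕ) with hD
      have hDcast : D = ε * ((K:ℝ) * n) := by rw [hD]; push_cast; ring
      clear_value D
      have hDle : D ≤ μ * n / 2 := by
        rw [hDcast]
        have : ε * ((K:ℝ)*n) ≤ (μ/(2*K)) * ((K:ℝ)*n) := by
          apply mul_le_mul_of_nonneg_right hεle1 (by positivity)
        calc ε * ((K:ℝ)*n) ≤ (μ/(2*K)) * ((K:ℝ)*n) := this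
          _ = μ * n / 2 := by field_simp
      set t₀ : ℕ := ⌈((i:ℝ) + D)/μ⌉₊ with ht₀
      clear_value t₀
      have harg0 : (0:ℝ) ≤ ((i:ℝ) + D)/μ := by
        apply div_nonneg _ hμpos.le
        have : (0:ℝ) ≤ D := by rw [hDcast]; positivity
        linarith
      have ht₀le : t₀ ≤ K * n := by
        rw [ht₀, Nat.ceil_le]
        rw [div_le_iff₀ hμpos]
        have : ((K*n : ℕ):ℝ) = (K:ℝ)*n := by push_cast; ring
        rw [this]
        have h1 : (K:ℝ) = (⌈1/μ⌉₊ : ℝ) + 2 := by rw [hK]; push_cast; ring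
        rw [h1]
        have h2 : (1:ℝ) ≤ (⌈1/μ⌉₊ : ℝ) * μ := by
          have := mul_le_mul_of_nonneg_right hKr hμpos.le
          calc (1:ℝ) = 1/μ * μ := by field_simp
            _ ≤ (⌈1/μ⌉₊ : ℝ) * μ := this
        nlinarith
      -- S 0 t₀ ≥ i
      have hdev0 := hQK 0 (le_refl _) (by exact_mod_cast Nat.zero_le (K*n)) t₀ ht₀le
      have hμt₀ : (i:ℝ) + D ≤ μ * t₀ := by
        have := Nat.le_ceil (((i:ℝ) + D)/μ)
        rw [← ht₀] at this
        calc (i:ℝ) + D = (((i:ℝ) + D)/μ) * μ := by field_simp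
          _ ≤ (t₀:ℝ) * μ := mul_le_mul_of_nonneg_right this hμpos.le
          _ = μ * t₀ := by ring
      have hS0 : (i:ℝ) ≤ ((S 0 t₀ : ℤ):ℝ) := by
        have := (abs_le.1 hdev0).1
        linarith
      have hS0' : i ≤ S 0 t₀ := by exact_mod_cast hS0
      obtain ⟨s, hs, hsa⟩ := h.reach 0 i t₀ hi0 hS0'
      have hTt₀ : frogT S i ≤ (t₀ : ℕ∞) := by
        refine (frogT_le_hitTime i).trans ((hitTime_le (by rw [zero_add, hsa])).trans ?_)
        exact_mod_cast Nat.cast_le.2 hs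
      have hTt₀' : (frogT S i).toNat ≤ t₀ := by
        have := ENat.toNat_le_toNat hTt₀ (by simp)
        simpa using this
      -- position bound
      set T : ℕ := (frogT S i).toNat with hTdef
      clear_value T
      have hdevi := hQ i hi0 hin (n - T) (Nat.sub_le _ _)
      have hcast : ((n - T : ℕ) : ℝ) = (n:ℝ) - (T:ℝ) := by
        have : T ≤ n := hTn
        push_cast [this]
        ring
      rw [← heq, frogZ_active hT, ← hTdef]
      have hlow : μ * ((n:ℝ) - T) - ε * n ≤ ((S i (n - T) : ℤ):ℝ) := by
        have := (abs_le.1 hdevi).1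
        rw [hcast] at this
        linarith
      have hTt₀r : (T:ℝ) ≤ (t₀:ℝ) := by exact_mod_cast hTt₀'
      have hμt₀' : μ * t₀ < (i:ℝ) + D + μ := by
        have := Nat.ceil_lt_add_one harg0
        rw [← ht₀] at this
        have h2 := mul_lt_mul_of_pos_left this hμpos
        calc μ * (t₀:ℝ) < μ * (((i:ℝ) + D)/μ + 1) := h2
          _ = (i:ℝ) + D + μ := by field_simp
      have hεK : ε * ((K:ℝ)+1) ≤ (μ-c)/2 := by
        have : ε * ((K:ℝ)+1) ≤ ((μ-c)/(2*(K+1))) * ((K:ℝ)+1) :=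
          mul_le_mul_of_nonneg_right hεle2 (by positivity)
        calc ε * ((K:ℝ)+1) ≤ ((μ-c)/(2*(K+1))) * ((K:ℝ)+1) := this
          _ = (μ-c)/2 := by field_simp
      have hnbig' : 2*μ/(μ-c) < (n:ℝ) := hnbig
      have hμc : (0:ℝ) < μ - c := by linarith
      have hnμ : 2*μ < (n:ℝ)*(μ-c) := by
        rw [div_lt_iff₀ hμc] at hnbig'
        linarith
      push_cast
      -- z = i + S i (n-T) > i + μ(n-T) - εn ≥ μn - D - εn - μ > cn
      have key : μ * ((n:ℝ) - T) ≥ μ * n - μ * t₀ := by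
        have := mul_le_mul_of_nonneg_left hTt₀r hμ0
        linarith
      have hεKn : ε * ((K:ℝ)+1) * n ≤ (μ-c)/2 * n :=
        mul_le_mul_of_nonneg_right hεK hn0.le
      rw [hDcast] at hμt₀'
      linarith [hlow, hμt₀', key, hεKn, hnμ]
  · -- upper bound
    intro c hc
    have hε : (0:ℝ) < (c - μ)/2 := by linarith
    filter_upwards [hdev ((c-μ)/2) hε, eventually_ge_atTop 1] with n hQ hn1
    have hn0 : (0:ℝ) < n := by exact_mod_cast hn1
    rw [div_lt_iff₀ hn0]
    have hle : sInf (A n) ≤ S 0 n := csInf_le (frog_bddBelow h n) (frog_mem0 n)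
    have hler : ((sInf (A n) : ℤ):ℝ) ≤ ((S 0 n : ℤ):ℝ) := by exact_mod_cast hle
    have hdev0 := hQ 0 (le_refl _) (by exact_mod_cast Nat.zero_le n) n (le_refl _)
    have := (abs_le.1 hdev0).2
    nlinarith
end Main

section Model

variable {Ω : Type*} [MeasurableSpace Ω] {P : Measure Ω} [IsProbabilityMeasure P]
  {X : ℤ → ℕ → Ω → ℤ} {p : ℝ}

lemma setA_meas (hm : IsFrogModel P X p) (i : ℤ) (k : ℕ) (v : ℤ) :
    MeasurableSet {ω | X i k ω = v} := hm.meas i k (measurableSet_singleton v)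

lemma ae_mem_union (hm : IsFrogModel P X p) (hp : 1/2 ≤ p) (hp1 : p ≤ 1) (i : ℤ) (k : ℕ) :
    ∀ᵐ ω ∂P, X i k ω = 1 ∨ X i k ω = -1 := by
  have hA := setA_meas hm i k 1
  have hB := setA_meas hm i k (-1)
  have hdisj : Disjoint {ω | X i k ω = 1} {ω | X i k ω = -1} := by
    rw [Set.disjoint_left]; intro ω h1 h2
    simp only [Set.mem_setOf_eq] at h1 h2; omega
  have hu : P ({ω | X i k ω = 1} ∪ {ω | X i k ω = -1}) = 1 := by
    rw [measure_union hdisj hB, hm.prob_one, hm.prob_neg_one,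
      ← ENNReal.ofReal_add (by linarith) (by linarith)]
    norm_num
  have hc : P (({ω | X i k ω = 1} ∪ {ω | X i k ω = -1})ᶜ) = 0 := by
    rw [measure_compl (hA.union hB) (measure_ne_top _ _), hu, measure_univ, tsub_self]
  rw [ae_iff]
  have heq : {ω | ¬(X i k ω = 1 ∨ X i k ω = -1)}
      = ({ω | X i k ω = 1} ∪ {ω | X i k ω = -1})ᶜ := by
    ext ω; simp [not_or]
  rw [heq]; exact hc

lemma ae_steps (hm : IsFrogModel P X p) (hp : 1/2 ≤ p) (hp1 : p ≤ 1) :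
    ∀ᵐ ω ∂P, ∀ i k, X i k ω = 1 ∨ X i k ω = -1 := by
  rw [ae_all_iff]; intro i
  rw [ae_all_iff]; intro k
  exact ae_mem_union hm hp hp1 i k

lemma meas_cast (hm : IsFrogModel P X p) (i : ℤ) (k : ℕ) :
    Measurable (fun ω => ((X i k ω : ℤ) : ℝ)) :=
  measurable_from_top.comp (hm.meas i k)

lemma integrable_exp_sum (hm : IsFrogModel P X p) (hp : 1/2 ≤ p) (hp1 : p ≤ 1)
    (i : ℤ) (s : Finset ℕ) (t : ℝ) :
    Integrable (fun ω => Real.exp (t * ∑ k ∈ s, ((X i k ω : ℤ) : ℝ))) P := by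
  have hmeas : Measurable fun ω => Real.exp (t * ∑ k ∈ s, ((X i k ω : ℤ) : ℝ)) :=
    ((Finset.measurable_sum s (fun k _ => meas_cast hm i k)).const_mul t).exp
  refine Integrable.mono' (integrable_const (Real.exp (|t| * s.card)))
    hmeas.aestronglyMeasurable ?_
  filter_upwards [ae_steps hm hp hp1] with ω hω
  rw [Real.norm_eq_abs, Real.abs_exp]
  apply Real.exp_le_exp.2
  have hsum : |∑ k ∈ s, ((X i k ω : ℤ) : ℝ)| ≤ s.card := by
    refine (Finset.abs_sum_le_sum_abs _ _).trans ?_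
    have : ∀ k ∈ s, |((X i k ω : ℤ) : ℝ)| ≤ 1 := by
      intro k _
      rcases hω i k with h | h <;> rw [h] <;> norm_num
    calc ∑ k ∈ s, |((X i k ω : ℤ) : ℝ)| ≤ ∑ k ∈ s, (1:ℝ) := Finset.sum_le_sum this
      _ = s.card := by simp
  calc t * ∑ k ∈ s, ((X i k ω : ℤ) : ℝ) ≤ |t * ∑ k ∈ s, ((X i k ω : ℤ) : ℝ)| := le_abs_self _
    _ = |t| * |∑ k ∈ s, ((X i k ω : ℤ) : ℝ)| := abs_mul _ _
    _ ≤ |t| * s.card := mul_le_mul_of_nonneg_left hsum (abs_nonneg t)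

lemma mgf_single (hm : IsFrogModel P X p) (hp : 1/2 ≤ p) (hp1 : p ≤ 1)
    (i : ℤ) (k : ℕ) (t : ℝ) :
    mgf (fun ω => ((X i k ω : ℤ) : ℝ)) P t = p * Real.exp t + (1-p) * Real.exp (-t) := by
  have hA := setA_meas hm i k 1
  have hB := setA_meas hm i k (-1)
  have hae : (fun ω => Real.exp (t * ((X i k ω : ℤ) : ℝ))) =ᵐ[P]
      (fun ω => Set.indicator {ω | X i k ω = 1} (fun _ => Real.exp t) ω
        + Set.indicator {ω | X i k ω = -1} (fun _ => Real.exp (-t)) ω) := by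
    filter_upwards [ae_mem_union hm hp hp1 i k] with ω hω
    rcases hω with h1 | h1
    · have hnB : ω ∉ {ω | X i k ω = -1} := by simp [h1]
      rw [Set.indicator_of_mem (by exact h1) _, Set.indicator_of_notMem hnB, h1]
      norm_num
    · have hnA : ω ∉ {ω | X i k ω = 1} := by simp [h1]
      rw [Set.indicator_of_notMem hnA,
        Set.indicator_of_mem (show ω ∈ {ω | X i k ω = -1} from h1), h1]
      push_cast
      ring_nf
  rw [mgf, integral_congr_ae hae, integral_add
    ((integrable_const _).indicator hA) ((integrable_const _).indicator hB),
    integral_indicator hA, integral_indicator hB, setIntegral_const, setIntegral_const,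
    measureReal_def, measureReal_def, hm.prob_one, hm.prob_neg_one, ENNReal.toReal_ofReal (by linarith),
    ENNReal.toReal_ofReal (by linarith)]
  simp [smul_eq_mul]

lemma mgf_sum_eq (hm : IsFrogModel P X p) (hp : 1/2 ≤ p) (hp1 : p ≤ 1)
    (i : ℤ) (m : ℕ) (t : ℝ) :
    mgf (fun ω => ∑ k ∈ Finset.Icc 1 m, ((X i k ω : ℤ) : ℝ)) P t
      = (p * Real.exp t + (1-p) * Real.exp (-t))^m := by
  have hind : iIndepFun
      (fun ik : ℤ × ℕ => fun ω => ((X ik.1 ik.2 ω : ℤ) : ℝ)) P :=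
    hm.indep.comp (fun _ => (Int.cast : ℤ → ℝ)) (fun _ => measurable_from_top)
  have hmeasF : ∀ jk : ℤ × ℕ, Measurable (fun ω => ((X jk.1 jk.2 ω : ℤ) : ℝ)) :=
    fun jk => meas_cast hm jk.1 jk.2
  set emb : ℕ ↪ ℤ × ℕ := ⟨fun k => (i, k), fun a b h => by simpa using h⟩ with hemb
  have hs := hind.mgf_sum hmeasF ((Finset.Icc 1 m).map emb) (t := t)
  have hfun : (∑ jk ∈ (Finset.Icc 1 m).map emb,
      (fun ω => ((X jk.1 jk.2 ω : ℤ) : ℝ)))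
      = fun ω => ∑ k ∈ Finset.Icc 1 m, ((X i k ω : ℤ) : ℝ) := by
    funext ω
    rw [Finset.sum_apply, Finset.sum_map]
    rfl
  rw [hfun] at hs
  rw [hs, Finset.prod_map]
  have hv : ∀ k, mgf (fun ω => ((X (emb k).1 (emb k).2 ω : ℤ) : ℝ)) P t
      = p * Real.exp t + (1-p) * Real.exp (-t) := fun k => mgf_single hm hp hp1 i k t
  rw [Finset.prod_congr rfl (fun k _ => hv k), Finset.prod_const, Nat.card_Icc,
    Nat.add_sub_cancel]

end Model

section Tail

variable {Ω : Type*} [MeasurableSpace Ω] {P : Measure Ω} [IsProbabilityMeasure P]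
  {X : ℤ → ℕ → Ω → ℤ} {p : ℝ}

lemma mgf_shifted (hm : IsFrogModel P X p) (hp : 1/2 ≤ p) (hp1 : p ≤ 1)
    (i : ℤ) (m : ℕ) (a t : ℝ) :
    mgf (fun ω => (∑ k ∈ Finset.Icc 1 m, ((X i k ω : ℤ) : ℝ)) - a) P t
      = Real.exp (-(t*a)) * (p * Real.exp t + (1-p) * Real.exp (-t))^m := by
  have hfun : (fun ω => Real.exp (t * ((∑ k ∈ Finset.Icc 1 m, ((X i k ω : ℤ) : ℝ)) - a)))
      = fun ω => Real.exp (t * (∑ k ∈ Finset.Icc 1 m, ((X i k ω : ℤ) : ℝ))) * Real.exp (-(t*a)) := by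
    funext ω; rw [← Real.exp_add]; congr 1; ring
  rw [mgf, hfun, integral_mul_const]
  rw [show ∫ ω, Real.exp (t * (∑ k ∈ Finset.Icc 1 m, ((X i k ω : ℤ) : ℝ))) ∂P
    = mgf (fun ω => ∑ k ∈ Finset.Icc 1 m, ((X i k ω : ℤ) : ℝ)) P t from rfl]
  rw [mgf_sum_eq hm hp hp1 i m t]
  ring

lemma integrable_exp_shifted (hm : IsFrogModel P X p) (hp : 1/2 ≤ p) (hp1 : p ≤ 1)
    (i : ℤ) (m : ℕ) (a t : ℝ) :
    Integrable (fun ω => Real.exp (t * ((∑ k ∈ Finset.Icc 1 m, ((X i k ω : ℤ) : ℝ)) - a))) P := by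
  have hfun : (fun ω => Real.exp (t * ((∑ k ∈ Finset.Icc 1 m, ((X i k ω : ℤ) : ℝ)) - a)))
      = fun ω => Real.exp (t * (∑ k ∈ Finset.Icc 1 m, ((X i k ω : ℤ) : ℝ))) * Real.exp (-(t*a)) := by
    funext ω; rw [← Real.exp_add]; congr 1; ring
  rw [hfun]
  exact (integrable_exp_sum hm hp hp1 i (Finset.Icc 1 m) t).mul_const _

lemma tail_bound (hm : IsFrogModel P X p) (hp : 1/2 ≤ p) (hp1 : p ≤ 1)
    {l : ℝ} (hl0 : 0 ≤ l) (hl : l ≤ 1/2) (ε : ℝ) (i : ℤ) (m n : ℕ) (hmn : m ≤ n) :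
    P {ω | ε * n ≤ |((frogS X ω i m : ℤ) : ℝ) - (2*p-1)*m|}
      ≤ 2 * ENNReal.ofReal (Real.exp (l^2*n - l*ε*n)) := by
  set V : Ω → ℝ := fun ω => ∑ k ∈ Finset.Icc 1 m, ((X i k ω : ℤ) : ℝ) with hV
  have hVf : ∀ ω, ((frogS X ω i m : ℤ) : ℝ) = V ω := fun ω => by
    rw [hV]; simp [frogS]
  set W : Ω → ℝ := fun ω => V ω - (2*p-1)*m with hW
  have hsub : {ω | ε * n ≤ |((frogS X ω i m : ℤ) : ℝ) - (2*p-1)*m|}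
      ⊆ {ω | ε*n ≤ W ω} ∪ {ω | W ω ≤ -(ε*n)} := by
    intro ω hω
    simp only [Set.mem_setOf_eq, hVf] at hω
    rcases le_abs.1 hω with h | h
    · left; exact h
    · right; simp only [Set.mem_setOf_eq, hW]; linarith
  -- base nonneg and factor bounds
  have hp0 : (0:ℝ) ≤ p := by linarith
  have hq0 : (0:ℝ) ≤ 1 - p := by linarith
  have hmn' : (m:ℝ) ≤ (n:ℝ) := by exact_mod_cast hmn
  have hexp_mono : Real.exp (l^2*m - l*ε*n) ≤ Real.exp (l^2*n - l*ε*n) := by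
    apply Real.exp_le_exp.2
    nlinarith [sq_nonneg l]
  -- upper tail
  have hup : P {ω | ε*n ≤ W ω} ≤ ENNReal.ofReal (Real.exp (l^2*n - l*ε*n)) := by
    have h1 := measure_ge_le_exp_mul_mgf (μ := P) (X := W) (ε*n) hl0
      (integrable_exp_shifted hm hp hp1 i m _ l)
    have hbase : (0:ℝ) ≤ p * Real.exp l + (1-p) * Real.exp (-l) :=
      add_nonneg (mul_nonneg hp0 (Real.exp_pos _).le) (mul_nonneg hq0 (Real.exp_pos _).le)
    have hfac : p * Real.exp l + (1-p) * Real.exp (-l) ≤ Real.exp ((2*p-1)*l + l^2) :=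
      two_point_mgf_le hp hp1 (by rw [abs_of_nonneg hl0]; linarith)
    have hpow : (p * Real.exp l + (1-p) * Real.exp (-l))^m
        ≤ Real.exp ((2*p-1)*l + l^2)^m := pow_le_pow_left₀ hbase hfac m
    have hreal : (P {ω | ε*n ≤ W ω}).toReal ≤ Real.exp (l^2*n - l*ε*n) := by
      refine h1.trans ?_
      rw [mgf_shifted hm hp hp1 i m _ l]
      have heq : Real.exp (-l*(ε*n)) * (Real.exp (-(l*((2*p-1)*m)))
          * Real.exp ((2*p-1)*l + l^2)^m) = Real.exp (l^2*m - l*ε*n) := by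
        rw [← Real.exp_nat_mul, ← Real.exp_add, ← Real.exp_add]
        congr 1; ring
      calc Real.exp (-l*(ε*n)) * (Real.exp (-(l*((2*p-1)*m)))
            * (p * Real.exp l + (1-p) * Real.exp (-l))^m)
          ≤ Real.exp (-l*(ε*n)) * (Real.exp (-(l*((2*p-1)*m)))
            * Real.exp ((2*p-1)*l + l^2)^m) := by
            apply mul_le_mul_of_nonneg_left _ (Real.exp_pos _).le
            exact mul_le_mul_of_nonneg_left hpow (Real.exp_pos _).le
        _ = Real.exp (l^2*m - l*ε*n) := heq
        _ ≤ Real.exp (l^2*n - l*ε*n) := hexp_mono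
    have h2 := ENNReal.ofReal_le_ofReal hreal
    rwa [ENNReal.ofReal_toReal (measure_ne_top _ _)] at h2
  -- lower tail
  have hlo : P {ω | W ω ≤ -(ε*n)} ≤ ENNReal.ofReal (Real.exp (l^2*n - l*ε*n)) := by
    have h1 := measure_le_le_exp_mul_mgf (μ := P) (X := W) (-(ε*n)) (neg_nonpos.2 hl0)
      (integrable_exp_shifted hm hp hp1 i m _ (-l))
    have hbase : (0:ℝ) ≤ p * Real.exp (-l) + (1-p) * Real.exp (-(-l)) :=
      add_nonneg (mul_nonneg hp0 (Real.exp_pos _).le) (mul_nonneg hq0 (Real.exp_pos _).le)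
    have hfac : p * Real.exp (-l) + (1-p) * Real.exp (-(-l))
        ≤ Real.exp ((2*p-1)*(-l) + (-l)^2) :=
      two_point_mgf_le hp hp1 (by rw [abs_neg, abs_of_nonneg hl0]; linarith)
    have hpow : (p * Real.exp (-l) + (1-p) * Real.exp (-(-l)))^m
        ≤ Real.exp ((2*p-1)*(-l) + (-l)^2)^m := pow_le_pow_left₀ hbase hfac m
    have hreal : (P {ω | W ω ≤ -(ε*n)}).toReal ≤ Real.exp (l^2*n - l*ε*n) := by
      refine h1.trans ?_
      rw [mgf_shifted hm hp hp1 i m _ (-l)]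
      have heq : Real.exp (-(-l)*(-(ε*n))) * (Real.exp (-((-l)*((2*p-1)*m)))
          * Real.exp ((2*p-1)*(-l) + (-l)^2)^m) = Real.exp (l^2*m - l*ε*n) := by
        rw [← Real.exp_nat_mul, ← Real.exp_add, ← Real.exp_add]
        congr 1; ring
      calc Real.exp (-(-l)*(-(ε*n))) * (Real.exp (-((-l)*((2*p-1)*m)))
            * (p * Real.exp (-l) + (1-p) * Real.exp (-(-l)))^m)
          ≤ Real.exp (-(-l)*(-(ε*n))) * (Real.exp (-((-l)*((2*p-1)*m)))
            * Real.exp ((2*p-1)*(-l) + (-l)^2)^m) := by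
            apply mul_le_mul_of_nonneg_left _ (Real.exp_pos _).le
            exact mul_le_mul_of_nonneg_left hpow (Real.exp_pos _).le
        _ = Real.exp (l^2*m - l*ε*n) := heq
        _ ≤ Real.exp (l^2*n - l*ε*n) := hexp_mono
    have h2 := ENNReal.ofReal_le_ofReal hreal
    rwa [ENNReal.ofReal_toReal (measure_ne_top _ _)] at h2
  calc P {ω | ε * n ≤ |((frogS X ω i m : ℤ) : ℝ) - (2*p-1)*m|}
      ≤ P ({ω | ε*n ≤ W ω} ∪ {ω | W ω ≤ -(ε*n)}) := measure_mono hsub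
    _ ≤ P {ω | ε*n ≤ W ω} + P {ω | W ω ≤ -(ε*n)} := measure_union_le _ _
    _ ≤ ENNReal.ofReal (Real.exp (l^2*n - l*ε*n)) + ENNReal.ofReal (Real.exp (l^2*n - l*ε*n)) :=
        add_le_add hup hlo
    _ = 2 * ENNReal.ofReal (Real.exp (l^2*n - l*ε*n)) := (two_mul _).symm

end Tail

section BC

variable {Ω : Type*} [MeasurableSpace Ω] {P : Measure Ω} [IsProbabilityMeasure P]
  {X : ℤ → ℕ → Ω → ℤ} {p : ℝ}

lemma uniform_dev (hm : IsFrogModel P X p) (hp : 1/2 ≤ p) (hp1 : p ≤ 1)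
    {ε : ℝ} (hε : 0 < ε) :
    ∀ᵐ ω ∂P, ∀ᶠ n : ℕ in atTop, ∀ i : ℤ, 0 ≤ i → i ≤ (n:ℤ) → ∀ m : ℕ, m ≤ n →
      |((frogS X ω i m : ℤ) : ℝ) - (2*p-1)*m| ≤ ε * n := by
  set l : ℝ := min (1/2) (ε/2) with hl
  have hl0 : 0 < l := lt_min (by norm_num) (by linarith)
  have hlle : l ≤ 1/2 := min_le_left _ _
  have hlε : l ≤ ε/2 := min_le_right _ _
  clear_value l
  set c : ℝ := l*ε/2 with hc
  have hc0 : 0 < c := by rw [hc]; positivity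
  clear_value c
  set Bad : ℕ → Set Ω := fun n => ⋃ im ∈ (Finset.Icc 0 n ×ˢ Finset.Icc 0 n),
    {ω | ε*n ≤ |((frogS X ω (im.1:ℤ) im.2 : ℤ) : ℝ) - (2*p-1)*im.2|} with hBad
  have hPB : ∀ n, P (Bad n) ≤ ((n+1)*(n+1) : ℕ) * (2 * ENNReal.ofReal (Real.exp (-(c*n)))) := by
    intro n
    rw [hBad]
    refine (measure_biUnion_finset_le _ _).trans ?_
    have hone : ∀ im ∈ (Finset.Icc 0 n ×ˢ Finset.Icc 0 n),
        P {ω | ε*n ≤ |((frogS X ω (im.1:ℤ) im.2 : ℤ) : ℝ) - (2*p-1)*im.2|}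
          ≤ 2 * ENNReal.ofReal (Real.exp (-(c*n))) := by
      intro im him
      rw [Finset.mem_product, Finset.mem_Icc, Finset.mem_Icc] at him
      refine (tail_bound hm hp hp1 hl0.le hlle ε (im.1:ℤ) im.2 n him.2.2).trans ?_
      have hexp : Real.exp (l^2*n - l*ε*n) ≤ Real.exp (-(c*n)) := by
        apply Real.exp_le_exp.2
        have hn0 : (0:ℝ) ≤ n := Nat.cast_nonneg n
        have : l*l ≤ l*(ε/2) := mul_le_mul_of_nonneg_left hlε hl0.le
        have h2 : (l^2 - l*ε) * n ≤ (-c) * n := by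
          apply mul_le_mul_of_nonneg_right _ hn0
          rw [hc]; nlinarith
        nlinarith
      exact mul_le_mul_right (ENNReal.ofReal_le_ofReal hexp) 2
    refine (Finset.sum_le_card_nsmul _ _ _ hone).trans ?_
    rw [nsmul_eq_mul]
    simp
  have hgsum : Summable (fun n : ℕ => ((n:ℝ)+1)*((n:ℝ)+1) * (2 * Real.exp (-(c*n)))) := by
    set e : ℝ := Real.exp (-c) with he
    have he1 : e < 1 := by rw [he]; exact Real.exp_lt_one_iff.2 (by linarith)
    have he0 : 0 < e := Real.exp_pos _
    have hnorm : ‖e‖ < 1 := by rw [Real.norm_eq_abs, abs_of_pos he0]; exact he1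
    have h2 := summable_pow_mul_geometric_of_norm_lt_one 2 hnorm
    have h1 := summable_pow_mul_geometric_of_norm_lt_one 1 hnorm
    have h0 := summable_pow_mul_geometric_of_norm_lt_one 0 hnorm
    have hall : Summable (fun n : ℕ =>
        2*((n:ℝ)^2*e^n) + (4*((n:ℝ)^1*e^n) + 2*((n:ℝ)^0*e^n))) :=
      (h2.mul_left 2).add ((h1.mul_left 4).add (h0.mul_left 2))
    refine hall.congr fun n => ?_
    have hee : Real.exp (-(c*n)) = e^n := by
      rw [he, ← Real.exp_nat_mul]; congr 1; ring
    rw [hee]; ring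
  have hsum : (∑' n, P (Bad n)) ≠ ⊤ := by
    have hle : ∀ n : ℕ, P (Bad n)
        ≤ ENNReal.ofReal (((n:ℝ)+1)*((n:ℝ)+1) * (2 * Real.exp (-(c*n)))) := by
      intro n
      refine (hPB n).trans (le_of_eq ?_)
      rw [ENNReal.ofReal_mul (by positivity), ENNReal.ofReal_mul (by positivity),
        ENNReal.ofReal_mul (by norm_num), ENNReal.ofReal_ofNat]
      have : ENNReal.ofReal ((n:ℝ)+1) = ((n+1 : ℕ) : ℝ≥0∞) := by
        rw [← ENNReal.ofReal_natCast]; congr 1; push_cast; ring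
      rw [this]
      push_cast
      ring
    refine ne_top_of_le_ne_top ?_ (ENNReal.tsum_le_tsum hle)
    rw [← ENNReal.ofReal_tsum_of_nonneg (fun n => by positivity) hgsum]
    exact ENNReal.ofReal_ne_top
  filter_upwards [ae_eventually_notMem hsum] with ω hω
  filter_upwards [hω] with n hn
  intro i hi0 hin m hmn
  by_contra hcon
  push_neg at hcon
  apply hn
  rw [hBad]
  have himem : (i.toNat, m) ∈ (Finset.Icc 0 n ×ˢ Finset.Icc 0 n) := by
    rw [Finset.mem_product, Finset.mem_Icc, Finset.mem_Icc]
    omega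
  refine Set.mem_biUnion himem ?_
  have hcast : ((i.toNat : ℤ)) = i := Int.toNat_of_nonneg hi0
  simp only [Set.mem_setOf_eq, hcast]
  exact hcon.le

end BC


/-- **Lemma 3 (minimum over the non-negative frogs).**
For every drift parameter `p ∈ [1/2, 1]`, with `A_n⁺ = {i ≥ 0 : T_i ≤ n}` the set of active
frogs that started at non-negative sites, almost surely
`(1/n) · min_{i ∈ A_n⁺} Z_n^i → 2p - 1`. -/
theorem frog_min_nonneg_frogs
    {Ω : Type*} [MeasurableSpace Ω] (P : Measure Ω) [IsProbabilityMeasure P]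
    (X : ℤ → ℕ → Ω → ℤ) (p : ℝ) (hmodel : IsFrogModel P X p)
    (hp : 1 / 2 ≤ p) (hp1 : p ≤ 1) :
    ∀ᵐ ω ∂P, Tendsto (fun n : ℕ =>
        ((sInf {z : ℤ | ∃ i : ℤ, 0 ≤ i ∧ frogT (frogS X ω) i ≤ (n : ℕ∞) ∧
            frogZ (frogS X ω) n i = z} : ℤ) : ℝ) / n)
      atTop (𝓝 (2 * p - 1)) := by
  have hdev_ae : ∀ᵐ ω ∂P, ∀ j : ℕ, ∀ᶠ n : ℕ in atTop, ∀ i : ℤ, 0 ≤ i → i ≤ (n:ℤ) →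
      ∀ m : ℕ, m ≤ n →
      |((frogS X ω i m : ℤ) : ℝ) - (2*p-1)*m| ≤ (1/((j:ℝ)+1)) * n :=
    ae_all_iff.2 fun j => uniform_dev hmodel hp hp1 (by positivity)
  filter_upwards [ae_steps hmodel hp hp1, hdev_ae] with ω hstepω hdevω
  have hsteps : Steps (frogS X ω) := by
    constructor
    · intro i; simp [frogS]
    · intro i m
      have hsplit : frogS X ω i (m+1) = frogS X ω i m + X i (m+1) ω := by
        rw [frogS, frogS, ← Finset.Ico_add_one_right_eq_Icc, Finset.sum_Ico_succ_top (by omega),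
          Finset.Ico_add_one_right_eq_Icc]
      rcases hstepω i (m+1) with h1 | h1
      · left; rw [hsplit, h1]
      · right; rw [hsplit, h1]; ring
  refine frog_det (frogS X ω) (2*p-1) (by linarith) (by linarith) hsteps ?_
  intro ε hε
  obtain ⟨j, hj⟩ := exists_nat_one_div_lt hε
  filter_upwards [hdevω j] with n hn
  intro i hi0 hin m hmn
  refine (hn i hi0 hin m hmn).trans ?_
  exact mul_le_mul_of_nonneg_right hj.le (Nat.cast_nonneg n)
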